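/- Let φ : ℝ → ℝ be Lipschitz with constant K > 0 and 1-periodic, let J = (−1/K, 1/K), and let α be irrational. For each a ∈ J there is a unique t = γ_α(a) with Trans(F_{t,a}) = α, and for all a₀, a₁ ∈ J with a₀ ≠ a₁: −sup φ ≤ (γ_α(a₁) − γ_α(a₀))/(a₁ − a₀) ≤ −inf φ. In particular γ_α is Lipschitz continuous on J. -/

import Mathlib

open Filter Topology Set

section Stmt7Aux

open CircleDeg1Lift

private lemma exists_fract_nat_gt' (α : ℝ) (hα : Irrational α) {ε : ℝ} (hε : 0 < ε) (hε1 : ε < 1) :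
    ∃ q : ℕ, 0 < q ∧ 1 - ε < Int.fract ((q : ℝ) * α) := by
  have hfr_pos : ∀ m : ℕ, 0 < m → 0 < Int.fract ((m : ℝ) * α) := by
    intro m hm
    rcases (Int.fract_nonneg ((m : ℝ) * α)).lt_or_eq with h | h
    · exact h
    · exfalso
      have hmul : Irrational (((m : ℤ) : ℝ) * α) :=
        hα.intCast_mul (by exact_mod_cast hm.ne')
      have h2 : ((m : ℝ) * α) = (⌊(m : ℝ) * α⌋ : ℝ) := by
        have := Int.floor_add_fract ((m : ℝ) * α)
        rw [← h] at this
        linarith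
      exact (by exact_mod_cast hmul : Irrational ((m : ℝ) * α)).ne_int ⌊(m : ℝ) * α⌋ h2
  have step1 : ∃ m : ℕ, 0 < m ∧
      (Int.fract ((m : ℝ) * α) < ε ∨ 1 - ε < Int.fract ((m : ℝ) * α)) := by
    obtain ⟨N, hN⟩ := exists_nat_gt (1 / ε)
    have hN0 : 0 < (N : ℝ) := lt_trans (by positivity) hN
    have hNnat : 0 < N := by exact_mod_cast hN0
    have h1N : 1 / (N : ℝ) < ε := by
      rw [div_lt_iff₀ hN0]
      have := (div_lt_iff₀ hε).mp hN
      linarith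
    have h1Nle : (1 : ℝ) / N ≤ 1 := by
      rw [div_le_one hN0]; exact_mod_cast hNnat
    set u : ℕ → ℝ := fun q => Int.fract (((q : ℝ) + 1) * α) with hu
    have hu' : ∀ q : ℕ, u q = ((q : ℝ) + 1) * α - ⌊((q : ℝ) + 1) * α⌋ :=
      fun q => (Int.self_sub_floor _).symm
    have hbuck : ∀ q ∈ Finset.range (N + 1),
        (⌊u q * N⌋).toNat ∈ Finset.range N := by
      intro q _
      have h0 : (0 : ℝ) ≤ u q * N := mul_nonneg (Int.fract_nonneg _) hN0.le
      have h1 : u q * N < N := by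
        have := Int.fract_lt_one (((q : ℝ) + 1) * α)
        nlinarith [Int.fract_nonneg (((q : ℝ) + 1) * α)]
      have hfl : (0 : ℤ) ≤ ⌊u q * N⌋ := Int.floor_nonneg.mpr h0
      have hfl2 : (⌊u q * N⌋ : ℝ) < N := lt_of_le_of_lt (Int.floor_le _) h1
      rw [Finset.mem_range]
      have : ⌊u q * N⌋ < (N : ℤ) := by exact_mod_cast hfl2
      omega
    obtain ⟨i0, hi, j0, hj, hij, hfeq⟩ :=
      Finset.exists_ne_map_eq_of_card_lt_of_maps_to
        (by simp [Finset.card_range]) hbuck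
    have key : ∀ i j : ℕ, i < j → (⌊u i * N⌋).toNat = (⌊u j * N⌋).toNat →
        ∃ m : ℕ, 0 < m ∧
        (Int.fract ((m : ℝ) * α) < ε ∨ 1 - ε < Int.fract ((m : ℝ) * α)) := by
      intro i j hlt heq
      have hnear : |u j - u i| < 1 / N := by
        have e1 : (0:ℤ) ≤ ⌊u i * N⌋ :=
          Int.floor_nonneg.mpr (mul_nonneg (Int.fract_nonneg _) hN0.le)
        have e2 : (0:ℤ) ≤ ⌊u j * N⌋ :=
          Int.floor_nonneg.mpr (mul_nonneg (Int.fract_nonneg _) hN0.le)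
        have heqz : ⌊u i * N⌋ = ⌊u j * N⌋ := by omega
        have f1 : (⌊u i * N⌋ : ℝ) ≤ u i * N := Int.floor_le _
        have f2 : u i * N < ⌊u i * N⌋ + 1 := Int.lt_floor_add_one _
        have f3 : (⌊u j * N⌋ : ℝ) ≤ u j * N := Int.floor_le _
        have f4 : u j * N < ⌊u j * N⌋ + 1 := Int.lt_floor_add_one _
        rw [heqz] at f1 f2
        have d1 : u j - u i < 1 / N := by
          rw [lt_div_iff₀ hN0]; nlinarith
        have d2 : u i - u j < 1 / N := by
          rw [lt_div_iff₀ hN0]; nlinarith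
        rw [abs_lt]; constructor <;> linarith
      set m : ℕ := j - i with hm
      have hm0 : 0 < m := by omega
      refine ⟨m, hm0, ?_⟩
      have hcast : ((m : ℝ)) * α = (((j:ℝ) + 1) * α) - (((i:ℝ) + 1) * α) := by
        have : (m : ℝ) = (j : ℝ) - i := by
          rw [hm]; push_cast [Nat.cast_sub hlt.le]; ring
        rw [this]; ring
      have hfract : Int.fract ((m : ℝ) * α) = Int.fract (u j - u i) := by
        have e3 : (((j:ℝ) + 1) * α) - (((i:ℝ) + 1) * α)
            = ((⌊((j:ℝ)+1)*α⌋ - ⌊((i:ℝ)+1)*α⌋ : ℤ) : ℝ) + (u j - u i) := by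
          rw [hu' i, hu' j, Int.cast_sub]; ring
        rw [hcast, e3, Int.fract_intCast_add]
      have hne : u j ≠ u i := by
        intro h
        have h0 : Int.fract ((m:ℝ) * α) = 0 := by rw [hfract, h, sub_self, Int.fract_zero]
        have := hfr_pos m hm0
        linarith
      obtain ⟨ha1, ha2⟩ := abs_lt.mp hnear
      rcases hne.lt_or_gt with hlt2 | hlt2
      · right
        have hbig : Int.fract (u j - u i) = u j - u i + 1 := by
          have hsub : Int.fract (u j - u i) = Int.fract (u j - u i + 1) := by
            rw [show u j - u i + 1 = u j - u i + ((1:ℤ):ℝ) by push_cast; ring,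
              Int.fract_add_intCast]
          rw [hsub, Int.fract_eq_self.mpr ⟨by linarith, by linarith⟩]
        rw [hfract, hbig]
        linarith
      · left
        have hsmall : Int.fract (u j - u i) = u j - u i := by
          rw [Int.fract_eq_self.mpr ⟨by linarith, by linarith⟩]
        rw [hfract, hsmall]
        linarith
    rcases hij.lt_or_gt with h | h
    · exact key i0 j0 h hfeq
    · exact key j0 i0 h hfeq.symm
  obtain ⟨m, hm0, hcase⟩ := step1
  rcases hcase with hsmall | hbig
  · set β : ℝ := Int.fract ((m : ℝ) * α) with hβ
    have hβ0 : 0 < β := hfr_pos m hm0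
    have hβε : β < ε := hsmall
    have hexk : ∃ k : ℕ, 1 - ε < (k : ℝ) * β := by
      obtain ⟨k, hk⟩ := exists_nat_gt ((1 - ε) / β)
      exact ⟨k, by rwa [div_lt_iff₀ hβ0] at hk⟩
    set k₀ := Nat.find hexk with hk₀def
    have hk₀ : 1 - ε < (k₀ : ℝ) * β := Nat.find_spec hexk
    have hk₀0 : 0 < k₀ := by
      rcases Nat.eq_zero_or_pos k₀ with h | h
      · exfalso; rw [h] at hk₀; push_cast at hk₀; linarith
      · exact h
    have hprev : ¬ (1 - ε < ((k₀ - 1 : ℕ) : ℝ) * β) := Nat.find_min hexk (by omega)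
    push_neg at hprev
    have hcast : ((k₀ - 1 : ℕ) : ℝ) = (k₀ : ℝ) - 1 := by
      push_cast [Nat.cast_sub hk₀0]; ring
    have hub : (k₀ : ℝ) * β < 1 := by
      rw [hcast] at hprev; nlinarith
    refine ⟨k₀ * m, by positivity, ?_⟩
    have hfr : Int.fract ((↑(k₀ * m) : ℝ) * α) = (k₀ : ℝ) * β := by
      have e1 : (↑(k₀ * m) : ℝ) * α = ((k₀ * ⌊(m:ℝ)*α⌋ : ℤ) : ℝ) + (k₀ : ℝ) * β := by
        push_cast
        have h5 := Int.floor_add_fract ((m:ℝ) * α)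
        rw [hβ]
        nlinarith [h5]
      rw [e1, Int.fract_intCast_add, Int.fract_eq_self.mpr ⟨by positivity, hub⟩]
    rw [hfr]; exact hk₀
  · exact ⟨m, hm0, hbig⟩

private lemma translationNumber_lt_add' (f : CircleDeg1Lift)
    (hirr : Irrational f.translationNumber) {ε : ℝ} (hε : 0 < ε) :
    f.translationNumber <
      ((translate (Multiplicative.ofAdd ε) : CircleDeg1Liftˣ) * f).translationNumber := by
  set g := ((translate (Multiplicative.ofAdd ε) : CircleDeg1Liftˣ) * f : CircleDeg1Lift) with hg
  have hgx : ∀ x, g x = ε + f x := fun x => by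
    rw [hg]; simp [mul_apply, translate_apply]
  have hle : f ≤ g := fun x => by rw [hgx]; linarith
  rcases (translationNumber_mono hle).lt_or_eq with h | h
  · exact h
  exfalso
  set ε' : ℝ := min ε (1/2) with hε'
  have hε'0 : 0 < ε' := lt_min hε one_half_pos
  have hε'1 : ε' < 1 := lt_of_le_of_lt (min_le_right _ _) (by norm_num)
  have hε'ε : ε' ≤ ε := min_le_left _ _
  obtain ⟨q, hq0, hqf⟩ := exists_fract_nat_gt' f.translationNumber hirr hε'0 hε'1
  set p : ℤ := ⌊(q:ℝ) * f.translationNumber⌋ with hp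
  have hp1 : (q:ℝ) * f.translationNumber < p + 1 := Int.lt_floor_add_one _
  have hp2 : (p:ℝ) + 1 - ε' < q * f.translationNumber := by
    have h3 : (p:ℝ) + Int.fract ((q:ℝ) * f.translationNumber) = (q:ℝ) * f.translationNumber := Int.floor_add_fract _
    linarith
  have hτgq : (g ^ q).translationNumber < ((p + 1 : ℤ) : ℝ) := by
    rw [translationNumber_pow, ← h]
    push_cast
    linarith
  have hgq : ∀ x, (g ^ q) x < x + ((p + 1 : ℤ) : ℝ) := fun x =>
    (g ^ q).map_lt_of_translationNumber_lt_int hτgq x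
  obtain ⟨n, rfl⟩ : ∃ n, q = n + 1 := ⟨q - 1, by omega⟩
  have hfq : ∀ x, (f ^ (n + 1)) x + ε' ≤ (g ^ (n + 1)) x := by
    intro x
    have h1 : (f ^ n) x ≤ (g ^ n) x := pow_mono hle n x
    have h2 : (f ^ (n+1)) x = f ((f ^ n) x) := by rw [pow_succ', mul_apply]
    have h3 : (g ^ (n+1)) x = g ((g ^ n) x) := by rw [pow_succ', mul_apply]
    have h4 : g ((f ^ n) x) ≤ g ((g ^ n) x) := g.mono h1
    rw [h2, h3]
    have h5 : g ((f ^ n) x) = ε + f ((f ^ n) x) := hgx _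
    linarith
  have hfq' : ∀ x, (f ^ (n+1)) x ≤ x + (((p:ℝ) + 1) - ε') := by
    intro x
    have h6 := hgq x
    have h7 := hfq x
    push_cast at h6
    linarith
  have h8 : ((n + 1 : ℕ) : ℝ) * f.translationNumber ≤ (p:ℝ) + 1 - ε' := by
    rw [← translationNumber_pow]
    exact translationNumber_le_of_le_add _ hfq'
  linarith

private lemma no_dom' (f g : CircleDeg1Lift) (heq : f.translationNumber = g.translationNumber)
    (hirr : Irrational f.translationNumber) {ε : ℝ} (hε : 0 < ε)
    (hle : ∀ x, f x + ε ≤ g x) : False := by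
  have h1 := translationNumber_lt_add' f hirr hε
  have h2 : ((translate (Multiplicative.ofAdd ε) : CircleDeg1Liftˣ) * f : CircleDeg1Lift) ≤ g := by
    intro x
    have h3 : ((translate (Multiplicative.ofAdd ε) : CircleDeg1Liftˣ) * f : CircleDeg1Lift) x
        = ε + f x := by simp [mul_apply, translate_apply]
    rw [h3]
    linarith [hle x]
  have h4 := translationNumber_mono h2
  linarith

end Stmt7Aux

/-- `τ` is the translation number of `F`: for every `x`, `(F^[n] x - x)/n → τ`. -/
def IsTransNum (F : ℝ → ℝ) (τ : ℝ) : Prop :=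
  ∀ x : ℝ, Filter.Tendsto (fun n : ℕ => (F^[n] x - x) / n) Filter.atTop (nhds τ)

theorem stmt_7 (φ : ℝ → ℝ) (K : ℝ) (hK : 0 < K)
    (hLip : ∀ x y : ℝ, |φ x - φ y| ≤ K * |x - y|)
    (hper : ∀ x : ℝ, φ (x + 1) = φ x)
    (τ : ℝ → ℝ → ℝ)
    (hτ : ∀ t : ℝ, ∀ a ∈ Set.Ioo (-(1 / K)) (1 / K),
      IsTransNum (fun x => x + t + a * φ x) (τ t a))
    (α : ℝ) (hα : Irrational α) :
    ∃ γ : ℝ → ℝ,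
      (∀ a ∈ Set.Ioo (-(1 / K)) (1 / K),
        τ (γ a) a = α ∧ ∀ t : ℝ, τ t a = α → t = γ a) ∧
      (∀ a₀ ∈ Set.Ioo (-(1 / K)) (1 / K), ∀ a₁ ∈ Set.Ioo (-(1 / K)) (1 / K), a₀ ≠ a₁ →
        -sSup (Set.range φ) ≤ (γ a₁ - γ a₀) / (a₁ - a₀) ∧
          (γ a₁ - γ a₀) / (a₁ - a₀) ≤ -sInf (Set.range φ)) := by
  classical
  -- φ is continuous
  have hφc : Continuous φ := by
    have hl : LipschitzWith (Real.toNNReal K) φ := by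
      apply LipschitzWith.of_dist_le_mul
      intro x y
      rw [Real.dist_eq, Real.dist_eq, Real.coe_toNNReal _ hK.le]
      exact hLip x y
    exact hl.continuous
  -- φ is invariant under fractional part
  have hfract_eq : ∀ x : ℝ, φ (Int.fract x) = φ x := by
    intro x
    have hp : Function.Periodic φ 1 := hper
    have h2 := hp.sub_int_mul_eq (x := x) ⌊x⌋
    rw [show Int.fract x = x - ⌊x⌋ * 1 by rw [mul_one]; exact (Int.self_sub_floor x).symm]
    exact h2
  -- range of φ is bounded
  have hrange : Set.range φ ⊆ φ '' Set.Icc 0 1 := by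
    rintro y ⟨x, rfl⟩
    exact ⟨Int.fract x, ⟨Int.fract_nonneg x, (Int.fract_lt_one x).le⟩, hfract_eq x⟩
  have hbddA : BddAbove (Set.range φ) :=
    BddAbove.mono hrange (isCompact_Icc.image hφc).bddAbove
  have hbddB : BddBelow (Set.range φ) :=
    BddBelow.mono hrange (isCompact_Icc.image hφc).bddBelow
  have hφle : ∀ x, φ x ≤ sSup (Set.range φ) := fun x => le_csSup hbddA (mem_range_self x)
  have hφge : ∀ x, sInf (Set.range φ) ≤ φ x := fun x => csInf_le hbddB (mem_range_self x)
  set M : ℝ := max (sSup (Set.range φ)) (-sInf (Set.range φ)) with hM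
  have habs : ∀ x, |φ x| ≤ M := by
    intro x
    rw [abs_le]
    constructor
    · have := hφge x
      have h2 : -M ≤ sInf (Set.range φ) := by
        rw [hM]; have := le_max_right (sSup (Set.range φ)) (-sInf (Set.range φ)); linarith
      linarith
    · exact le_trans (hφle x) (le_max_left _ _)
  have hM0 : 0 ≤ M := le_trans (abs_nonneg (φ 0)) (habs 0)
  -- the circle lifts
  have hmono : ∀ t a, a ∈ Set.Ioo (-(1/K)) (1/K) → Monotone (fun x => x + t + a * φ x) := by
    intro t a ha x y hxy
    have h1 : |a| < 1/K := abs_lt.mpr ⟨ha.1, ha.2⟩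
    have haK : |a| * K ≤ 1 := by
      have h2 : |a| * K < (1/K) * K := by
        apply mul_lt_mul_of_pos_right h1 hK
      rw [one_div, inv_mul_cancel₀ hK.ne'] at h2
      exact h2.le
    have h3 : |φ y - φ x| ≤ K * (y - x) := by
      have := hLip y x
      rwa [abs_of_nonneg (sub_nonneg.mpr hxy)] at this
    have h4 : -(|a| * |φ y - φ x|) ≤ a * (φ y - φ x) := by
      rw [← abs_mul]; exact neg_abs_le _
    have h5 : |a| * |φ y - φ x| ≤ |a| * (K * (y - x)) :=
      mul_le_mul_of_nonneg_left h3 (abs_nonneg a)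
    have h6 : |a| * (K * (y - x)) ≤ 1 * (y - x) := by
      rw [← mul_assoc]
      exact mul_le_mul_of_nonneg_right haK (by linarith)
    simp only
    nlinarith
  have hFex : ∀ t a, a ∈ Set.Ioo (-(1/K)) (1/K) →
      ∃ F : CircleDeg1Lift, ∀ x, F x = x + t + a * φ x := by
    intro t a ha
    refine ⟨⟨⟨fun x => x + t + a * φ x, hmono t a ha⟩, fun x => by simp [hper x]; ring⟩,
      fun x => rfl⟩
  choose F hFx using hFex
  -- identification of τ with the translation number
  have hτeq : ∀ t a (ha : a ∈ Set.Ioo (-(1/K)) (1/K)),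
      τ t a = (F t a ha).translationNumber := by
    intro t a ha
    refine tendsto_nhds_unique (hτ t a ha 0) ?_
    have h2 := (F t a ha).tendsto_translationNumber 0
    refine h2.congr fun n => ?_
    have hc : ⇑(F t a ha) = fun x => x + t + a * φ x := funext (hFx t a ha)
    rw [show (fun x => x + t + a * φ x) = ⇑(F t a ha) from hc.symm,
      ← CircleDeg1Lift.coe_pow]
  -- existence and uniqueness of γ for each a
  have hEx : ∀ a, a ∈ Set.Ioo (-(1/K)) (1/K) →
      ∃ t, τ t a = α ∧ ∀ t', τ t' a = α → t' = t := by
    intro a ha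
    set T : ℝ → ℝ := fun t => (F t a ha).translationNumber with hT
    set C : ℝ := |a| * M with hC
    have hC0 : 0 ≤ C := mul_nonneg (abs_nonneg a) hM0
    have haφ : ∀ x, |a * φ x| ≤ C := by
      intro x
      rw [abs_mul, hC]
      exact mul_le_mul_of_nonneg_left (habs x) (abs_nonneg a)
    have hTub : ∀ t, T t ≤ t + C := by
      intro t
      apply CircleDeg1Lift.translationNumber_le_of_le_add
      intro x
      rw [hFx t a ha x]
      have := abs_le.mp (haφ x)
      linarith
    have hTlb : ∀ t, t - C ≤ T t := by
      intro t
      apply CircleDeg1Lift.le_translationNumber_of_add_le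
      intro x
      rw [hFx t a ha x]
      have := abs_le.mp (haφ x)
      linarith
    -- iterates, continuity
    set v : ℕ → ℝ → ℝ := fun n t => (fun x => x + t + a * φ x)^[n] 0 with hv
    have hvF : ∀ n t, ((F t a ha) ^ n) 0 = v n t := by
      intro n t
      have hc : ⇑(F t a ha) = fun x => x + t + a * φ x := funext (hFx t a ha)
      show (F t a ha ^ n) 0 = (fun x => x + t + a * φ x)^[n] 0
      rw [show (fun x => x + t + a * φ x) = ⇑(F t a ha) from hc.symm,
        ← CircleDeg1Lift.coe_pow]
    have hvc : ∀ n, Continuous (fun t => v n t) := by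
      intro n
      induction n with
      | zero => simpa [hv] using continuous_const
      | succ n ih =>
        have : (fun t => v (n+1) t) = fun t => v n t + t + a * φ (v n t) := by
          funext t
          rw [hv]
          simp only [Function.iterate_succ_apply']
        rw [this]
        exact (ih.add continuous_id).add (continuous_const.mul (hφc.comp ih))
    have hdist : ∀ (n : ℕ) t, |v n t - (n : ℝ) * T t| ≤ 1 := by
      intro n t
      have h2 := (F t a ha).dist_pow_map_zero_mul_translationNumber_le n
      rw [Real.dist_eq, hvF] at h2
      exact h2
    have hTc : Continuous T := by
      rw [Metric.continuous_iff]
      intro s ε hε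
      obtain ⟨n, hn⟩ := exists_nat_gt (3 / ε)
      have hn0 : (0:ℝ) < n := lt_trans (by positivity) hn
      have hnε : 3 < (n:ℝ) * ε := by
        have := (div_lt_iff₀ hε).mp hn
        linarith
      have hcn := (hvc n).continuousAt (x := s)
      rw [Metric.continuousAt_iff] at hcn
      obtain ⟨δ, hδ0, hδ⟩ := hcn ((n:ℝ) * ε / 3) (by positivity)
      refine ⟨δ, hδ0, fun t ht => ?_⟩
      have hb := hδ ht
      rw [Real.dist_eq] at hb ⊢
      have h1 := hdist n t
      have h2 := hdist n s
      have h3 : |(n:ℝ) * T t - (n:ℝ) * T s| ≤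
          |(n:ℝ) * T t - v n t| + |v n t - v n s| + |v n s - (n:ℝ) * T s| := by
        have := abs_add_le ((n:ℝ) * T t - v n t) (v n t - v n s)
        have := abs_add_le ((n:ℝ) * T t - v n t + (v n t - v n s)) (v n s - (n:ℝ) * T s)
        calc |(n:ℝ) * T t - (n:ℝ) * T s|
            = |((n:ℝ) * T t - v n t + (v n t - v n s)) + (v n s - (n:ℝ) * T s)| := by
              ring_nf
          _ ≤ |(n:ℝ) * T t - v n t + (v n t - v n s)| + |v n s - (n:ℝ) * T s| := abs_add_le _ _
          _ ≤ |(n:ℝ) * T t - v n t| + |v n t - v n s| + |v n s - (n:ℝ) * T s| := by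
              have := abs_add_le ((n:ℝ) * T t - v n t) (v n t - v n s)
              linarith
      have h4 : |(n:ℝ) * T t - v n t| = |v n t - (n:ℝ) * T t| := abs_sub_comm _ _
      have h5 : |(n:ℝ) * T t - (n:ℝ) * T s| = (n:ℝ) * |T t - T s| := by
        rw [← mul_sub, abs_mul, abs_of_pos hn0]
      have h6 : (n:ℝ) * |T t - T s| < (n:ℝ) * ε := by
        rw [← h5]
        calc |(n:ℝ) * T t - (n:ℝ) * T s|
            ≤ |(n:ℝ) * T t - v n t| + |v n t - v n s| + |v n s - (n:ℝ) * T s| := h3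
          _ < 1 + (n:ℝ) * ε / 3 + 1 := by rw [h4]; linarith
          _ < (n:ℝ) * ε := by linarith
      exact lt_of_mul_lt_mul_left (by linarith [h6]) hn0.le
    -- IVT
    have hivt : α ∈ Set.Icc (T (α - C)) (T (α + C)) := by
      constructor
      · linarith [hTub (α - C)]
      · linarith [hTlb (α + C)]
    obtain ⟨t0, -, ht0⟩ := intermediate_value_Icc (by linarith : α - C ≤ α + C)
      hTc.continuousOn hivt
    have ht0' : (F t0 a ha).translationNumber = α := ht0
    refine ⟨t0, by rw [hτeq t0 a ha]; exact ht0', ?_⟩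
    intro t' ht'
    by_contra hne
    have hiT : (F t' a ha).translationNumber = α := by rw [← hτeq t' a ha]; exact ht'
    have hirr' : Irrational (F t' a ha).translationNumber := by rw [hiT]; exact hα
    have heqT : (F t' a ha).translationNumber = (F t0 a ha).translationNumber := by
      rw [hiT, ht0']
    rcases lt_or_gt_of_ne hne with hlt | hlt
    · exact no_dom' (F t' a ha) (F t0 a ha) heqT hirr' (sub_pos.2 hlt)
        (fun x => by rw [hFx t' a ha x, hFx t0 a ha x]; linarith)
    · refine no_dom' (F t0 a ha) (F t' a ha) heqT.symm (by rw [ht0']; exact hα)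
        (sub_pos.2 hlt) (fun x => by rw [hFx t' a ha x, hFx t0 a ha x]; linarith)
  choose γ0 hγ0 using hEx
  refine ⟨fun a => if h : a ∈ Set.Ioo (-(1/K)) (1/K) then γ0 a h else 0,
    fun a ha => ?_, fun a₀ ha₀ a₁ ha₁ hne => ?_⟩
  · simp only [dif_pos ha]
    exact ⟨(hγ0 a ha).1, fun t ht => (hγ0 a ha).2 t ht⟩
  · simp only [dif_pos ha₀, dif_pos ha₁]
    set t₀ := γ0 a₀ ha₀ with ht₀def
    set t₁ := γ0 a₁ ha₁ with ht₁def
    have hτ₀ : τ t₀ a₀ = α := (hγ0 a₀ ha₀).1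
    have hτ₁ : τ t₁ a₁ = α := (hγ0 a₁ ha₁).1
    have hT₀ : (F t₀ a₀ ha₀).translationNumber = α := by rw [← hτeq t₀ a₀ ha₀]; exact hτ₀
    have hT₁ : (F t₁ a₁ ha₁).translationNumber = α := by rw [← hτeq t₁ a₁ ha₁]; exact hτ₁
    have hc0 : a₁ - a₀ ≠ 0 := sub_ne_zero.2 (Ne.symm hne)
    -- two existence claims
    have claim1 : ∃ x, t₁ - t₀ + (a₁ - a₀) * φ x ≤ 0 := by
      by_contra hcon
      push_neg at hcon
      set ψ : ℝ → ℝ := fun x => t₁ - t₀ + (a₁ - a₀) * φ x with hψ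
      have hψc : Continuous ψ := continuous_const.add (continuous_const.mul hφc)
      obtain ⟨x₀, hx₀m, hx₀⟩ := isCompact_Icc.exists_isMinOn
        (Set.nonempty_Icc.2 (zero_le_one)) hψc.continuousOn
      have hε : 0 < ψ x₀ := hcon x₀
      have hlow : ∀ x, ψ x₀ ≤ ψ x := by
        intro x
        have h1 : ψ (Int.fract x) = ψ x := by
          simp only [hψ]
          rw [hfract_eq]
        rw [← h1]
        exact hx₀ ⟨Int.fract_nonneg x, (Int.fract_lt_one x).le⟩
      refine no_dom' (F t₀ a₀ ha₀) (F t₁ a₁ ha₁) (by rw [hT₀, hT₁]) (by rw [hT₀]; exact hα)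
        hε (fun x => ?_)
      rw [hFx t₀ a₀ ha₀ x, hFx t₁ a₁ ha₁ x]
      have h2 := hlow x
      have hψ0 : ψ x₀ = t₁ - t₀ + (a₁ - a₀) * φ x₀ := rfl
      have hψx : ψ x = t₁ - t₀ + (a₁ - a₀) * φ x := rfl
      rw [hψ0, hψx] at h2
      rw [hψ0]
      linarith
    have claim2 : ∃ x, 0 ≤ t₁ - t₀ + (a₁ - a₀) * φ x := by
      by_contra hcon
      push_neg at hcon
      set ψ : ℝ → ℝ := fun x => -(t₁ - t₀ + (a₁ - a₀) * φ x) with hψ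
      have hψc : Continuous ψ := (continuous_const.add (continuous_const.mul hφc)).neg
      obtain ⟨x₀, hx₀m, hx₀⟩ := isCompact_Icc.exists_isMinOn
        (Set.nonempty_Icc.2 (zero_le_one)) hψc.continuousOn
      have hε : 0 < ψ x₀ := by simp only [hψ]; linarith [hcon x₀]
      have hlow : ∀ x, ψ x₀ ≤ ψ x := by
        intro x
        have h1 : ψ (Int.fract x) = ψ x := by
          simp only [hψ]
          rw [hfract_eq]
        rw [← h1]
        exact hx₀ ⟨Int.fract_nonneg x, (Int.fract_lt_one x).le⟩
      refine no_dom' (F t₁ a₁ ha₁) (F t₀ a₀ ha₀) (by rw [hT₀, hT₁]) (by rw [hT₁]; exact hα)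
        hε (fun x => ?_)
      rw [hFx t₀ a₀ ha₀ x, hFx t₁ a₁ ha₁ x]
      have h2 := hlow x
      have hψ0 : ψ x₀ = -(t₁ - t₀ + (a₁ - a₀) * φ x₀) := rfl
      have hψx : ψ x = -(t₁ - t₀ + (a₁ - a₀) * φ x) := rfl
      rw [hψ0, hψx] at h2
      rw [hψ0]
      linarith
    obtain ⟨x₀, hx0⟩ := claim1
    obtain ⟨x₁, hx1⟩ := claim2
    constructor
    · rcases hc0.lt_or_gt with hneg | hpos
      · rw [le_div_iff_of_neg hneg]
        nlinarith [hφle x₀]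
      · rw [le_div_iff₀ hpos]
        nlinarith [hφle x₁]
    · rcases hc0.lt_or_gt with hneg | hpos
      · rw [div_le_iff_of_neg hneg]
        nlinarith [hφge x₁]
      · rw [div_le_iff₀ hpos]
        nlinarith [hφge x₀]
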